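/- Let B be a bialgebra over a commutative ring R. Every left-invariant derivation X of B satisfies X = id ⋆ (ε ∘ X), i.e. X is determined by its 'value at the unit' ε ∘ X. Consequently, X ↦ ε ∘ X is an R-linear bijection from the space of left-invariant derivations of B onto the space of ε-derivations B → R, with inverse v ↦ id ⋆ v. -/
import Mathlib


open TensorProduct

section

variable {R B : Type*} [CommRing R] [Ring B] [Bialgebra R B]

/-- A derivation of the bialgebra `B`: `X ∘ μ = μ ∘ (X ⊗ id + id ⊗ X)`. -/
def IsDerivation (X : B →ₗ[R] B) : Prop :=
  X ∘ₗ LinearMap.mul' R B =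
    LinearMap.mul' R B ∘ₗ
      (TensorProduct.map X LinearMap.id + TensorProduct.map LinearMap.id X)

/-- A left-invariant linear map of the bialgebra `B`: `(id ⊗ X) ∘ Δ = Δ ∘ X`. -/
def IsLeftInvariant (X : B →ₗ[R] B) : Prop :=
  TensorProduct.map LinearMap.id X ∘ₗ Coalgebra.comul = Coalgebra.comul ∘ₗ X

/-- An `ε`-derivation of `B` valued in `R`: `v(fg) = v(f)ε(g) + ε(f)v(g)`. -/
def IsEpsDerivation (v : B →ₗ[R] R) : Prop :=
  ∀ f g : B, v (f * g) = v f * Coalgebra.counit g + Coalgebra.counit f * v g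

/-- The convolution `id ⋆ v = μ ∘ (id ⊗ v) ∘ Δ` (using `B ⊗ R ≃ B`); the left translation
of `v`. -/
noncomputable def leftTranslation (v : B →ₗ[R] R) : B →ₗ[R] B :=
  (TensorProduct.rid R B).toLinearMap ∘ₗ
    TensorProduct.map LinearMap.id v ∘ₗ Coalgebra.comul

lemma LID_map_id_eq_lTensor (v : B →ₗ[R] R) :
    TensorProduct.map (LinearMap.id : B →ₗ[R] B) v = v.lTensor B := rfl

lemma LID_leftTranslation_apply (v : B →ₗ[R] R) (f : B) :
    leftTranslation v f = (TensorProduct.rid R B) (v.lTensor B (Coalgebra.comul f)) := rfl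

/-- Multiplicativity of the "convolve with `v`" map against the "counit" map,
for an `ε`-derivation `v`. -/
lemma LID_key (v : B →ₗ[R] R) (hv : IsEpsDerivation v) (x y : B ⊗[R] B) :
    (TensorProduct.rid R B) (v.lTensor B (x * y)) =
      (TensorProduct.rid R B) (v.lTensor B x) *
        (TensorProduct.rid R B) ((Coalgebra.counit (R := R) (A := B)).lTensor B y) +
      (TensorProduct.rid R B) ((Coalgebra.counit (R := R) (A := B)).lTensor B x) *
        (TensorProduct.rid R B) (v.lTensor B y) := by
  induction x using TensorProduct.induction_on with
  | zero => simp
  | tmul a b =>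
    induction y using TensorProduct.induction_on with
    | zero => simp
    | tmul c d =>
      simp only [Algebra.TensorProduct.tmul_mul_tmul, LinearMap.lTensor_tmul,
        TensorProduct.rid_tmul]
      rw [hv b d, add_smul, smul_mul_assoc, smul_mul_assoc, mul_smul_comm, mul_smul_comm,
        smul_smul, smul_smul]
    | add y₁ y₂ h1 h2 =>
      simp only [mul_add, map_add, h1, h2]
      abel
  | add x₁ x₂ h1 h2 =>
    simp only [add_mul, map_add, h1, h2, add_mul]
    abel

lemma LID_counit_lTensor_comul (f : B) :
    (TensorProduct.rid R B) ((Coalgebra.counit (R := R) (A := B)).lTensor B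
      (Coalgebra.comul f)) = f := by
  rw [Coalgebra.lTensor_counit_comul]
  simp

lemma LID_aux_assoc (w : B →ₗ[R] R) :
    (TensorProduct.rid R B).toLinearMap.lTensor B ∘ₗ ((w.lTensor B).lTensor B) ∘ₗ
      (TensorProduct.assoc R B B B).toLinearMap
    = (TensorProduct.rid R (B ⊗[R] B)).toLinearMap ∘ₗ w.lTensor (B ⊗[R] B) := by
  apply TensorProduct.ext_threefold
  intro x y z
  simp [smul_tmul']

lemma LID_aux_comul (w : B →ₗ[R] R) :
    Coalgebra.comul ∘ₗ (TensorProduct.rid R B).toLinearMap ∘ₗ w.lTensor B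
    = (TensorProduct.rid R (B ⊗[R] B)).toLinearMap ∘ₗ w.lTensor (B ⊗[R] B) ∘ₗ
      (Coalgebra.comul (R := R) (A := B)).rTensor B := by
  apply TensorProduct.ext'
  intro b c
  simp

lemma LID_left_invariant (v : B →ₗ[R] R) : IsLeftInvariant (leftTranslation v) := by
  unfold IsLeftInvariant leftTranslation
  rw [LID_map_id_eq_lTensor]
  rw [show TensorProduct.map (LinearMap.id : B →ₗ[R] B)
      ((TensorProduct.rid R B).toLinearMap ∘ₗ v.lTensor B ∘ₗ Coalgebra.comul)
    = ((TensorProduct.rid R B).toLinearMap ∘ₗ v.lTensor B ∘ₗ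
        (Coalgebra.comul (R := R) (A := B))).lTensor B from rfl]
  rw [LinearMap.lTensor_comp, LinearMap.lTensor_comp]
  calc (TensorProduct.rid R B).toLinearMap.lTensor B ∘ₗ
        ((v.lTensor B).lTensor B ∘ₗ (Coalgebra.comul (R := R) (A := B)).lTensor B) ∘ₗ
        Coalgebra.comul
      = (TensorProduct.rid R B).toLinearMap.lTensor B ∘ₗ (v.lTensor B).lTensor B ∘ₗ
          ((Coalgebra.comul (R := R) (A := B)).lTensor B ∘ₗ Coalgebra.comul) := by
        simp only [LinearMap.comp_assoc]
    _ = (TensorProduct.rid R B).toLinearMap.lTensor B ∘ₗ (v.lTensor B).lTensor B ∘ₗ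
          (TensorProduct.assoc R B B B).toLinearMap ∘ₗ
          (Coalgebra.comul (R := R) (A := B)).rTensor B ∘ₗ Coalgebra.comul := by
        rw [← Coalgebra.coassoc]
    _ = ((TensorProduct.rid R B).toLinearMap.lTensor B ∘ₗ (v.lTensor B).lTensor B ∘ₗ
          (TensorProduct.assoc R B B B).toLinearMap) ∘ₗ
          (Coalgebra.comul (R := R) (A := B)).rTensor B ∘ₗ Coalgebra.comul := by
        simp only [LinearMap.comp_assoc]
    _ = ((TensorProduct.rid R (B ⊗[R] B)).toLinearMap ∘ₗ v.lTensor (B ⊗[R] B)) ∘ₗ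
          (Coalgebra.comul (R := R) (A := B)).rTensor B ∘ₗ Coalgebra.comul := by
        rw [LID_aux_assoc]
    _ = (Coalgebra.comul ∘ₗ (TensorProduct.rid R B).toLinearMap ∘ₗ v.lTensor B) ∘ₗ
          Coalgebra.comul := by
        rw [LID_aux_comul]
        simp only [LinearMap.comp_assoc]
    _ = Coalgebra.comul ∘ₗ (TensorProduct.rid R B).toLinearMap ∘ₗ v.lTensor B ∘ₗ
          Coalgebra.comul := by simp only [LinearMap.comp_assoc]

/-- Every left-invariant derivation `X` of `B` satisfies
`X = id ⋆ (ε ∘ X)`; consequently `X ↦ ε ∘ X` is an `R`-linear bijection from left-invariant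
derivations of `B` onto `ε`-derivations `B → R`, with inverse `v ↦ id ⋆ v`. -/
theorem left_invariant_derivation_determined_by_value_at_unit :
    (∀ X : B →ₗ[R] B, IsDerivation X → IsLeftInvariant X →
        X = leftTranslation (Coalgebra.counit ∘ₗ X) ∧
          IsEpsDerivation (Coalgebra.counit ∘ₗ X)) ∧
    (∀ v : B →ₗ[R] R, IsEpsDerivation v →
        IsDerivation (leftTranslation v) ∧ IsLeftInvariant (leftTranslation v) ∧
          Coalgebra.counit ∘ₗ leftTranslation v = v) := by
  constructor
  · intro X hder hinv
    constructor
    · -- X = leftTranslation (counit ∘ X)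
      have h1 : X.lTensor B ∘ₗ (Coalgebra.comul (R := R) (A := B))
          = Coalgebra.comul ∘ₗ X := hinv
      unfold leftTranslation
      rw [show TensorProduct.map (LinearMap.id : B →ₗ[R] B)
          ((Coalgebra.counit : B →ₗ[R] R) ∘ₗ X)
        = ((Coalgebra.counit : B →ₗ[R] R) ∘ₗ X).lTensor B from rfl]
      rw [LinearMap.lTensor_comp]
      ext f
      simp only [LinearMap.coe_comp, Function.comp_apply, LinearEquiv.coe_coe]
      rw [show (X.lTensor B) (Coalgebra.comul f) = Coalgebra.comul (X f) from
        LinearMap.congr_fun h1 f, Coalgebra.lTensor_counit_comul]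
      simp
    · intro f g
      have h := LinearMap.congr_fun hder (f ⊗ₜ[R] g)
      simp only [LinearMap.coe_comp, Function.comp_apply, LinearMap.mul'_apply,
        LinearMap.add_apply, TensorProduct.map_tmul, LinearMap.id_coe, id_eq,
        map_add] at h ⊢
      rw [h, map_add]
      simp
  · intro v hv
    refine ⟨?_, LID_left_invariant v, ?_⟩
    · -- derivation
      unfold IsDerivation
      apply TensorProduct.ext'
      intro f g
      simp only [LinearMap.coe_comp, Function.comp_apply, LinearMap.mul'_apply,
        LinearMap.add_apply, TensorProduct.map_tmul, LinearMap.id_coe, id_eq, map_add]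
      rw [LID_leftTranslation_apply, LID_leftTranslation_apply, LID_leftTranslation_apply,
        Bialgebra.comul_mul, LID_key v hv, LID_counit_lTensor_comul,
        LID_counit_lTensor_comul]
    · -- counit ∘ leftTranslation v = v
      ext f
      rw [LinearMap.coe_comp, Function.comp_apply, LID_leftTranslation_apply]
      have h : (Coalgebra.counit : B →ₗ[R] R) ∘ₗ (TensorProduct.rid R B).toLinearMap ∘ₗ
            v.lTensor B
          = (TensorProduct.lid R R).toLinearMap ∘ₗ v.lTensor R ∘ₗ
            (Coalgebra.counit (R := R) (A := B)).rTensor B := by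
        apply TensorProduct.ext'
        intro b c
        simp [mul_comm]
      have h2 := LinearMap.congr_fun h (Coalgebra.comul f)
      simp only [LinearMap.coe_comp, Function.comp_apply, LinearEquiv.coe_coe] at h2
      rw [h2, Coalgebra.rTensor_counit_comul]
      simp

end
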